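/- Let f : X → Y be a Borel map of bounded compression (f_*m_X ≤ C m_Y). For any measurable Banach bundle T over Y, the pullback of the section module equals the section module of the pullback bundle: f*Γ(T) = Γ(f*T), where f*T has partition (f^{-1}(E_n)) and fiber norm n'(x,v) = n(f(x),v). Concretely, the map s ↦ s∘f (as a section of f*T) is linear, satisfies |f*s| = |s|∘f, and its image generates Γ(f*T) as an L^0(m_X)-normed module. -/

import Mathlib

open MeasureTheory Filter
open scoped ENNReal

namespace L0SerreSwan

/-- A measurable Banach bundle over `(X,d,m)`: a Borel partition `(E_n)_{n∈ℕ}` of `X`,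
with total space `⊔ₙ Eₙ × ℝⁿ`, together with a measurable function `nrm` assigning to
`m`-a.e. point `x ∈ E_n` a norm `nrm n x ·` on the fiber `ℝⁿ`. -/
structure MBB (X : Type*) [MeasurableSpace X] (μ : MeasureTheory.Measure X) where
  E : ℕ → Set X
  measE : ∀ n, MeasurableSet (E n)
  disjE : ∀ n m, n ≠ m → Disjoint (E n) (E m)
  unionE : (⋃ n, E n) = Set.univ
  nrm : (n : ℕ) → X → (Fin n → ℝ) → ℝ
  meas_nrm : ∀ n, Measurable (fun p : X × (Fin n → ℝ) => nrm n p.1 p.2)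
  nrm_nonneg : ∀ n, ∀ᵐ x ∂μ, x ∈ E n → ∀ v, 0 ≤ nrm n x v
  nrm_definite : ∀ n, ∀ᵐ x ∂μ, x ∈ E n → ∀ v, nrm n x v = 0 → v = 0
  nrm_smul : ∀ n, ∀ᵐ x ∂μ, x ∈ E n → ∀ (c : ℝ) (v), nrm n x (c • v) = |c| * nrm n x v
  nrm_triangle : ∀ n, ∀ᵐ x ∂μ, x ∈ E n → ∀ v w, nrm n x (v + w) ≤ nrm n x v + nrm n x w

variable {X : Type*} [MeasurableSpace X] {μ : MeasureTheory.Measure X}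

/-- A measurable section of a measurable Banach bundle, recorded by its values
`val n x ∈ ℝⁿ` (only the values for `x ∈ E_n` are relevant). -/
structure Sec (B : MBB X μ) where
  val : (n : ℕ) → X → Fin n → ℝ
  meas : ∀ n, Measurable (val n)

/-- Two sections agree `m`-a.e. (fiberwise, on each piece of the partition). -/
def Sec.aeeq (B : MBB X μ) (s t : Sec B) : Prop :=
  ∀ n, ∀ᵐ x ∂μ, x ∈ B.E n → s.val n x = t.val n x

/-- Pointwise sum of sections. -/
def Sec.add {B : MBB X μ} (s t : Sec B) : Sec B :=
  ⟨fun n x i => s.val n x i + t.val n x i, fun n =>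
    measurable_pi_lambda _ fun i =>
      ((measurable_pi_apply i).comp (s.meas n)).add
        ((measurable_pi_apply i).comp (t.meas n))⟩

/-- Pointwise difference of sections. -/
def Sec.sub {B : MBB X μ} (s t : Sec B) : Sec B :=
  ⟨fun n x i => s.val n x i - t.val n x i, fun n =>
    measurable_pi_lambda _ fun i =>
      ((measurable_pi_apply i).comp (s.meas n)).sub
        ((measurable_pi_apply i).comp (t.meas n))⟩

/-- Multiplication of a section by a (Borel representative of an) `L⁰` function. -/
def Sec.smul {B : MBB X μ} (g : X → ℝ) (hg : Measurable g) (s : Sec B) : Sec B :=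
  ⟨fun n x i => g x * s.val n x i, fun n =>
    measurable_pi_lambda _ fun i =>
      hg.mul ((measurable_pi_apply i).comp (s.meas n))⟩

/-- The pointwise norm `|s|(x) = nrm(s(x))` of a section. -/
noncomputable def ptNorm (B : MBB X μ) (s : Sec B) : X → ℝ :=
  fun x => ∑' n, (B.E n).indicator (fun y => B.nrm n y (s.val n y)) x

/-- The distance `d(s,t) = ∫ |s-t| ∧ 1 dm'` on sections. -/
noncomputable def secDist (B : MBB X μ) (m' : MeasureTheory.Measure X) (s t : Sec B) : ℝ :=
  ∫ x, min (ptNorm B (s.sub t) x) 1 ∂m'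

/-- The constant section associated to a vector `q ∈ ℝⁿ`: it equals `q` on `E_n` and
vanishes on the other pieces of the partition. -/
def constSec (B : MBB X μ) (n : ℕ) (q : Fin n → ℝ) : Sec B :=
  ⟨fun k _x i => if h : k = n then q (Fin.cast h i) else 0,
   fun _k => measurable_const⟩

/-- A finite `L⁰`-linear combination `∑ᵢ gᵢ • uᵢ` of sections. -/
def lincomb {B : MBB X μ} {k : ℕ} (g : Fin k → X → ℝ) (hg : ∀ i, Measurable (g i))
    (u : Fin k → Sec B) : Sec B :=
  ⟨fun n x j => ∑ i, g i x * (u i).val n x j, fun n =>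
    measurable_pi_lambda _ fun j =>
      Finset.measurable_sum _ fun i _ =>
        (hg i).mul ((measurable_pi_apply j).comp ((u i).meas n))⟩

end L0SerreSwan

namespace L0SerreSwan

/-- The pullback `f*s` of a section `s` of a bundle over `Y` along `f : X → Y`, viewed
as a section of a bundle `B'` over `X` (intended: `B' = f*B`). -/
def pullSec {X Y : Type*} [MeasurableSpace X] [MeasurableSpace Y]
    {μX : Measure X} {μY : Measure Y} {B : MBB Y μY} (B' : MBB X μX)
    (f : X → Y) (hf : Measurable f) (s : Sec B) : Sec B' :=
  ⟨fun n x => s.val n (f x), fun n => (s.meas n).comp hf⟩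

section Aux

variable {X : Type*} [MeasurableSpace X] {μ : MeasureTheory.Measure X}

lemma ptNorm_eq_single (B : MBB X μ) (u : Sec B) {m : ℕ} {x : X} (hx : x ∈ B.E m) :
    ptNorm B u x = B.nrm m x (u.val m x) := by
  have h : (∑' n, (B.E n).indicator (fun y => B.nrm n y (u.val n y)) x)
      = (B.E m).indicator (fun y => B.nrm m y (u.val m y)) x := by
    refine tsum_eq_single m fun b hb => ?_
    have hxb : x ∉ B.E b := fun hxb => Set.disjoint_left.mp (B.disjE b m hb) hxb hx
    exact Set.indicator_of_notMem hxb _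
  rw [ptNorm, h, Set.indicator_of_mem hx]

lemma measurable_indicator_nrm (B : MBB X μ) (u : Sec B) (n : ℕ) :
    Measurable fun y => (B.E n).indicator (fun z => B.nrm n z (u.val n z)) y :=
  Measurable.indicator ((B.meas_nrm n).comp (measurable_id.prodMk (u.meas n))) (B.measE n)

lemma exists_mem_piece (B : MBB X μ) (x : X) : ∃ m, x ∈ B.E m := by
  have : x ∈ ⋃ n, B.E n := by rw [B.unionE]; trivial
  exact Set.mem_iUnion.mp this

lemma summable_pieces (B : MBB X μ) (u : Sec B) (x : X) :
    Summable fun n => (B.E n).indicator (fun z => B.nrm n z (u.val n z)) x := by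
  obtain ⟨m, hm⟩ := exists_mem_piece B x
  refine summable_of_ne_finset_zero (s := {m}) fun b hb => ?_
  have hbm : b ≠ m := by simpa using hb
  have hxb : x ∉ B.E b := fun hxb => Set.disjoint_left.mp (B.disjE b m hbm) hxb hm
  exact Set.indicator_of_notMem hxb _

lemma measurable_ptNorm (B : MBB X μ) (u : Sec B) : Measurable (ptNorm B u) := by
  refine measurable_of_tendsto_metrizable
    (f := fun N x => ∑ n ∈ Finset.range N, (B.E n).indicator (fun z => B.nrm n z (u.val n z)) x)
    (fun N => Finset.measurable_sum _ fun n _ => measurable_indicator_nrm B u n) ?_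
  rw [tendsto_pi_nhds]
  intro x
  exact (summable_pieces B u x).hasSum.tendsto_sum_nat

lemma ptNorm_nonneg_at (B : MBB X μ) (u : Sec B) {x : X}
    (hx : ∀ n, x ∈ B.E n → ∀ v, 0 ≤ B.nrm n x v) : 0 ≤ ptNorm B u x := by
  refine tsum_nonneg fun n => ?_
  by_cases hxn : x ∈ B.E n
  · rw [Set.indicator_of_mem hxn]; exact hx n hxn _
  · rw [Set.indicator_of_notMem hxn]

end Aux

/-- **Pullback of section modules.** Let `f : X → Y` be a Borel map of bounded
compression (`f_* m_X ≤ C m_Y`) between metric measure spaces, `T` a measurable Banach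
bundle over `Y` and `f*T` the pullback bundle over `X` (partition `f⁻¹(E_n)`, fiber norm
`n'(x,·) = n(f(x),·)`). Then `f*Γ(T) = Γ(f*T)`: the map `s ↦ s ∘ f` is linear, satisfies
`|f*s| = |s| ∘ f` `m_X`-a.e., and its image generates `Γ(f*T)` (finite `L⁰(m_X)`-linear
combinations of pullbacks are dense). -/
theorem pullback_sections
    {X Y : Type*} [MetricSpace X] [CompleteSpace X] [SecondCountableTopology X]
    [MeasurableSpace X] [BorelSpace X]
    [MetricSpace Y] [CompleteSpace Y] [SecondCountableTopology Y]
    [MeasurableSpace Y] [BorelSpace Y]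
    (μX : Measure X) [IsLocallyFiniteMeasure μX] (hμX : μX ≠ 0)
    (μY : Measure Y) [IsLocallyFiniteMeasure μY] (hμY : μY ≠ 0)
    (m' : Measure X) [IsProbabilityMeasure m'] (h₁ : μX ≪ m') (h₂ : m' ≪ μX)
    (f : X → Y) (hf : Measurable f) (C : ℝ≥0∞) (hC : C ≠ 0)
    (hcomp : Measure.map f μX ≤ C • μY)
    (B : MBB Y μY) (B' : MBB X μX)
    (hE : ∀ n, B'.E n = f ⁻¹' (B.E n))
    (hn : ∀ n (x : X) (v : Fin n → ℝ), B'.nrm n x v = B.nrm n (f x) v) :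
    -- `f*` is linear
    (∀ s t : Sec B,
      Sec.aeeq B' (pullSec B' f hf (Sec.add s t))
        (Sec.add (pullSec B' f hf s) (pullSec B' f hf t))) ∧
    (∀ (g : Y → ℝ) (hg : Measurable g) (s : Sec B),
      Sec.aeeq B' (pullSec B' f hf (Sec.smul g hg s))
        (Sec.smul (g ∘ f) (hg.comp hf) (pullSec B' f hf s))) ∧
    -- `f*` preserves the pointwise norm: `|f*s| = |s| ∘ f`
    (∀ s : Sec B,
      (fun x => ptNorm B' (pullSec B' f hf s) x) =ᵐ[μX] fun x => ptNorm B s (f x)) ∧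
    -- the image of `f*` generates `Γ(f*T)`
    (∀ (t : Sec B') (ε : ℝ), 0 < ε →
      ∃ (k : ℕ) (g : Fin k → X → ℝ) (hg : ∀ i, Measurable (g i)) (s : Fin k → Sec B),
        secDist B' m' t (lincomb g hg fun i => pullSec B' f hf (s i)) < ε) := by
  refine ⟨?_, ?_, ?_, ?_⟩
  · intro s t n
    exact Filter.Eventually.of_forall fun x _ => rfl
  · intro g hg s n
    exact Filter.Eventually.of_forall fun x _ => rfl
  · intro s
    refine Filter.Eventually.of_forall fun x => ?_
    unfold ptNorm pullSec
    refine tsum_congr fun n => ?_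
    simp only [hE, hn]
    by_cases hx : f x ∈ B.E n
    · rw [Set.indicator_of_mem (by exact hx : x ∈ f ⁻¹' B.E n), Set.indicator_of_mem hx]
    · rw [Set.indicator_of_notMem (by exact hx : x ∉ f ⁻¹' B.E n),
        Set.indicator_of_notMem hx]
  · intro t ε hε
    -- the tail sets
    set F : ℕ → Set X := fun N => ⋃ n, ⋃ (_ : N ≤ n), B'.E n with hF
    have measF : ∀ N, MeasurableSet (F N) := fun N =>
      MeasurableSet.iUnion fun n => MeasurableSet.iUnion fun _ => B'.measE n
    have antiF : Antitone F := by
      intro N M hNM x hx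
      obtain ⟨n, hn', hxn⟩ := Set.mem_iUnion₂.mp hx
      exact Set.mem_iUnion₂.mpr ⟨n, le_trans hNM hn', hxn⟩
    have interF : (⋂ N, F N) = ∅ := by
      ext x
      simp only [Set.mem_iInter, Set.mem_empty_iff_false, iff_false]
      intro hx
      obtain ⟨m, hm⟩ := exists_mem_piece B' x
      obtain ⟨n, hn', hxn⟩ := Set.mem_iUnion₂.mp (hx (m + 1))
      have hnm : n ≠ m := by omega
      exact Set.disjoint_left.mp (B'.disjE n m hnm) hxn hm
    have htend : Tendsto (fun N => m' (F N)) atTop (nhds 0) := by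
      have := tendsto_measure_iInter_atTop (μ := m')
        (fun N => (measF N).nullMeasurableSet) antiF ⟨0, measure_ne_top m' _⟩
      rwa [interF, measure_empty] at this
    have hev : ∀ᶠ N in atTop, m' (F N) < ENNReal.ofReal ε :=
      htend.eventually (gt_mem_nhds (ENNReal.ofReal_pos.mpr hε))
    obtain ⟨N, hN⟩ := hev.exists
    have hNlt : (m' (F N)).toReal < ε :=
      ENNReal.toReal_lt_of_lt_ofReal hN
    -- indexing
    set α := (n : Fin N) × Fin (n : ℕ) with hα
    let e : α ≃ Fin (Fintype.card α) := Fintype.equivFin α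
    refine ⟨Fintype.card α,
      fun i x => t.val ((e.symm i).1 : ℕ) x (e.symm i).2,
      fun i => (measurable_pi_apply _).comp (t.meas _),
      fun i => constSec B ((e.symm i).1 : ℕ) (Pi.single (e.symm i).2 1), ?_⟩
    set L := lincomb (B := B') (fun i x => t.val ((e.symm i).1 : ℕ) x (e.symm i).2)
      (fun i => (measurable_pi_apply _).comp (t.meas _))
      (fun i => pullSec B' f hf (constSec B ((e.symm i).1 : ℕ) (Pi.single (e.symm i).2 1)))
      with hL
    -- the linear combination reproduces `t` on the first `N` pieces
    have key : ∀ (m : ℕ), m < N → ∀ x : X, L.val m x = t.val m x := by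
      intro m hm x
      funext j'
      have h1 : L.val m x j' = ∑ a : α, t.val (a.1 : ℕ) x a.2 *
          (if h : m = (a.1 : ℕ) then
            (Pi.single a.2 (1 : ℝ) : Fin (a.1 : ℕ) → ℝ) (Fin.cast h j') else 0) :=
        Fintype.sum_bijective e.symm e.symm.bijective _ _ (fun i => rfl)
      rw [h1, ← Finset.univ_sigma_univ, Finset.sum_sigma]
      rw [Finset.sum_eq_single_of_mem (⟨m, hm⟩ : Fin N) (Finset.mem_univ _)]
      · have hcast : ∀ (h : m = m), Fin.cast h j' = j' := fun _ => rfl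
        simp only [dif_pos rfl, hcast, Pi.single_apply, mul_ite, mul_one, mul_zero]
        simp
      · intro b _ hb
        have hbm : m ≠ (b : ℕ) := fun h => hb (Fin.ext h.symm)
        simp [dif_neg hbm]
    -- a.e. properties of the pointwise norm
    have hae : ∀ᵐ x ∂μX, (∀ n, x ∈ B'.E n → ∀ v, 0 ≤ B'.nrm n x v) ∧
        (∀ n, x ∈ B'.E n → ∀ (c : ℝ) v, B'.nrm n x (c • v) = |c| * B'.nrm n x v) :=
      ((ae_all_iff.mpr B'.nrm_nonneg).and (ae_all_iff.mpr B'.nrm_smul))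
    have haem' : ∀ᵐ x ∂m', (∀ n, x ∈ B'.E n → ∀ v, 0 ≤ B'.nrm n x v) ∧
        (∀ n, x ∈ B'.E n → ∀ (c : ℝ) v, B'.nrm n x (c • v) = |c| * B'.nrm n x v) :=
      h₂.ae_le hae
    set h : X → ℝ := fun x => min (ptNorm B' (t.sub L) x) 1 with hh
    have hbound : ∀ᵐ x ∂m', 0 ≤ h x ∧ h x ≤ (F N).indicator (fun _ => (1 : ℝ)) x := by
      filter_upwards [haem'] with x hx
      obtain ⟨m, hm⟩ := exists_mem_piece B' x
      have hnonneg : 0 ≤ ptNorm B' (t.sub L) x := ptNorm_nonneg_at B' _ hx.1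
      have h0 : 0 ≤ h x := le_min hnonneg zero_le_one
      refine ⟨h0, ?_⟩
      by_cases hmN : m < N
      · have hxF : x ∉ F N := by
          intro hxF
          obtain ⟨n, hn', hxn⟩ := Set.mem_iUnion₂.mp hxF
          have hnm : n ≠ m := by omega
          exact Set.disjoint_left.mp (B'.disjE n m hnm) hxn hm
        have hval : (t.sub L).val m x = 0 := by
          funext i
          show t.val m x i - L.val m x i = 0
          rw [key m hmN x, sub_self]
        have hzero : ptNorm B' (t.sub L) x = 0 := by
          rw [ptNorm_eq_single B' _ hm, hval]
          have := hx.2 m hm 0 0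
          simpa using this
        rw [Set.indicator_of_notMem hxF]
        rw [hh]
        simp only [hzero]
        simp
      · have hxF : x ∈ F N := Set.mem_iUnion₂.mpr ⟨m, le_of_not_gt hmN, hm⟩
        rw [Set.indicator_of_mem hxF]
        exact min_le_right _ _
    have hmeas_h : Measurable h := (measurable_ptNorm B' (t.sub L)).min measurable_const
    have hint_h : Integrable h m' := by
      refine Integrable.mono' (integrable_const (1 : ℝ)) hmeas_h.aestronglyMeasurable ?_
      filter_upwards [hbound] with x hx
      rw [Real.norm_eq_abs, abs_of_nonneg hx.1]
      refine le_trans hx.2 ?_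
      by_cases hxF : x ∈ F N
      · rw [Set.indicator_of_mem hxF]
      · rw [Set.indicator_of_notMem hxF]; exact zero_le_one
    have hint_ind : Integrable ((F N).indicator fun _ => (1 : ℝ)) m' :=
      (integrable_const (1 : ℝ)).indicator (measF N)
    have hle : ∫ x, h x ∂m' ≤ ∫ x, (F N).indicator (fun _ => (1 : ℝ)) x ∂m' :=
      integral_mono_ae hint_h hint_ind (hbound.mono fun x hx => hx.2)
    have hind : ∫ x, (F N).indicator (fun _ => (1 : ℝ)) x ∂m' = (m' (F N)).toReal := by
      rw [integral_indicator_const (1 : ℝ) (measF N)]; simp; rfl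
    calc secDist B' m' t L = ∫ x, h x ∂m' := rfl
      _ ≤ (m' (F N)).toReal := by rw [← hind]; exact hle
      _ < ε := hNlt

end L0SerreSwan
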